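/- arXiv:2302.03260 — 2 statements merged into one kernel-verified Lean document; each statement's English description precedes it below -/
import Mathlib

section
/- Let G = Z₂ × Z₄ and θ a normalized orthomorphism of G with A₂₂ = {x}. Then {a⁻¹θ(a) : a ∈ A₄₄} = {x, θ(x)}. -/
/-- The group `ℤ₂ × ℤ₄` (written additively). -/
abbrev G24 : Type := ZMod 2 × ZMod 4

/-- A normalized orthomorphism: a bijection fixing the identity whose associated
complete mapping `x ↦ -x + θ x` (i.e. `x⁻¹θ(x)` in additive notation) is a bijection. -/
def IsNormOrtho (θ : G24 → G24) : Prop :=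
  Function.Bijective θ ∧ θ 0 = 0 ∧ Function.Bijective (fun x => -x + θ x)

/-- Orthogonality of orthomorphisms: `x ↦ θ₁(x)⁻¹θ₂(x)` is a bijection. -/
def Orthogonal (θ₁ θ₂ : G24 → G24) : Prop :=
  Function.Bijective (fun x => -θ₁ x + θ₂ x)

/-- `A i j θ = {x : order of x is i and order of θ(x) is j}`. -/
def A (i j : ℕ) (θ : G24 → G24) : Set G24 :=
  {x | addOrderOf x = i ∧ addOrderOf (θ x) = j}

lemma four_smul' (a : G24) : (4:ℕ) • a = 0 := by
  rw [succ_nsmul, succ_nsmul, succ_nsmul, one_nsmul]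
  revert a; decide

lemma ord_ne_one' (a : G24) (h0 : a ≠ 0) : addOrderOf a ≠ 1 := by
  intro h; exact h0 (AddMonoid.addOrderOf_eq_one_iff.mp h)

lemma ord2_iff' (a : G24) : addOrderOf a = 2 ↔ (a + a = 0 ∧ a ≠ 0) := by
  constructor
  · intro h
    refine ⟨?_, ?_⟩
    · have := addOrderOf_nsmul_eq_zero a
      rw [h, two_nsmul] at this; exact this
    · intro h0; rw [h0] at h; simp at h
  · rintro ⟨h2, h0⟩
    have hd : addOrderOf a ∣ 2 := addOrderOf_dvd_of_nsmul_eq_zero (by rw [two_nsmul]; exact h2)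
    have hne := ord_ne_one' a h0
    have hle : addOrderOf a ≤ 2 := Nat.le_of_dvd (by norm_num) hd
    interval_cases h : (addOrderOf a) <;> omega

lemma ord4_iff' (a : G24) : addOrderOf a = 4 ↔ a + a ≠ 0 := by
  constructor
  · intro h h2
    have hd : addOrderOf a ∣ 2 := addOrderOf_dvd_of_nsmul_eq_zero (by rw [two_nsmul]; exact h2)
    rw [h] at hd; exact absurd hd (by norm_num)
  · intro h2
    have hd : addOrderOf a ∣ 4 := addOrderOf_dvd_of_nsmul_eq_zero (four_smul' a)
    have h0 : a ≠ 0 := by rintro rfl; simp at h2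
    have hne := ord_ne_one' a h0
    have hne2 : addOrderOf a ≠ 2 := by
      intro h; exact h2 ((ord2_iff' a).mp h).1
    have hle : addOrderOf a ≤ 4 := Nat.le_of_dvd (by norm_num) hd
    interval_cases h : (addOrderOf a) <;> omega

/-- Klein four lemma inside `G24`. -/
lemma klein' : ∀ (x t y : G24), (x + x = 0 ∧ t + t = 0 ∧ x ≠ 0 ∧ t ≠ 0 ∧
    x ≠ t ∧ y + y = 0 ∧ y ≠ 0 ∧ y ≠ x + t) → (y = x ∨ y = t) := by decide

lemma klein (x t y : G24) (hx : x + x = 0) (ht : t + t = 0) (hx0 : x ≠ 0) (ht0 : t ≠ 0)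
    (hxt : x ≠ t) (hy : y + y = 0) (hy0 : y ≠ 0) (hyxt : y ≠ x + t) : y = x ∨ y = t :=
  klein' x t y ⟨hx, ht, hx0, ht0, hxt, hy, hy0, hyxt⟩

/-- if both a,b have a+a≠0 then -a+b is 2-torsion -/
lemma tor2 (a b : G24) (ha : a + a ≠ 0) (hb : b + b ≠ 0) : (-a + b) + (-a + b) = 0 := by
  revert ha hb; revert a b; decide

theorem complete_map_image_A44 (θ : G24 → G24) (hθ : IsNormOrtho θ) (x : G24)
    (hx : A 2 2 θ = {x}) :
    (fun a => -a + θ a) '' A 4 4 θ = {x, θ x} := by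
  obtain ⟨hθb, hθ0, hφb⟩ := hθ
  set φ : G24 → G24 := fun a => -a + θ a with hφdef
  have hφ0 : φ 0 = 0 := by simp [hφdef, hθ0]
  -- x is in A 2 2
  have hxA : x ∈ A 2 2 θ := by rw [hx]; rfl
  obtain ⟨hx2, hθx2⟩ := hxA
  rw [ord2_iff'] at hx2 hθx2
  -- x ≠ θ x
  have hxne : x ≠ θ x := by
    intro h
    have : φ x = 0 := by simp [hφdef, ← h, hx2.1, neg_eq_of_add_eq_zero_left hx2.1]
    have := hφb.injective (this.trans hφ0.symm)
    exact hx2.2 this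
  -- φ x = x + θ x
  have hφx : φ x = x + θ x := by
    simp only [hφdef]
    rw [neg_eq_of_add_eq_zero_left hx2.1]
  ext y
  simp only [Set.mem_image, Set.mem_insert_iff, Set.mem_singleton_iff]
  constructor
  · rintro ⟨a, ⟨ha4, hθa4⟩, rfl⟩
    rw [ord4_iff'] at ha4 hθa4
    have hy2 : φ a + φ a = 0 := tor2 a (θ a) ha4 hθa4
    have hy0 : φ a ≠ 0 := by
      intro h
      have : a = 0 := hφb.injective (h.trans hφ0.symm)
      rw [this] at ha4; simp at ha4
    have hyx : φ a ≠ x + θ x := by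
      rw [← hφx]
      intro h
      have : a = x := hφb.injective h
      rw [this] at ha4; exact ha4 hx2.1
    exact klein x (θ x) (φ a) hx2.1 hθx2.1 hx2.2 hθx2.2 hxne hy2 hy0 hyx
  · intro hy
    have hy2 : y + y = 0 ∧ y ≠ 0 := by
      rcases hy with rfl | rfl
      · exact hx2
      · exact hθx2
    obtain ⟨a, ha⟩ := hφb.surjective y
    refine ⟨a, ?_, ha⟩
    have hθa : θ a = a + y := by
      rw [← ha]; simp [hφdef]
    have ha0 : a ≠ 0 := by
      rintro rfl
      rw [hφ0] at ha
      exact hy2.2 ha.symm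
    by_cases haa : a + a = 0
    · -- a would be in A 2 2, hence a = x, contradiction
      have hθaa : θ a + θ a = 0 := by
        rw [hθa, show a + y + (a + y) = (a + a) + (y + y) by abel, haa, hy2.1, add_zero]
      have hθa0 : θ a ≠ 0 := by
        intro h
        exact ha0 (hθb.injective (h.trans hθ0.symm))
      have hmem : a ∈ A 2 2 θ := ⟨(ord2_iff' a).mpr ⟨haa, ha0⟩, (ord2_iff' (θ a)).mpr ⟨hθaa, hθa0⟩⟩
      rw [hx] at hmem
      have hax : a = x := hmem
      rw [hax, hφx] at ha
      -- ha : x + θ x = y, with y = x or y = θ x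
      exfalso
      rcases hy with h | h
      · rw [h] at ha
        have h2 : x + θ x = x + 0 := by rw [ha, add_zero]
        exact hθx2.2 (add_left_cancel h2)
      · rw [h] at ha
        have h2 : x + θ x = 0 + θ x := by rw [ha, zero_add]
        exact hx2.2 (add_right_cancel h2)
    · -- a has order 4, θ a = a + y has order 4
      have hθaa : θ a + θ a ≠ 0 := by
        rw [hθa, show a + y + (a + y) = (a + a) + (y + y) by abel, hy2.1, add_zero]
        exact haa
      exact ⟨(ord4_iff' a).mpr haa, (ord4_iff' (θ a)).mpr hθaa⟩
end

section
/- Let G = Z₂ × Z₄ and θ₁, θ₂ normalized orthomorphisms of G with respective sets A₄₄ and A₄₄′ (elements of order 4 mapped to elements of order 4). If |A₄₄ ∩ A₄₄′| = 2, then θ₁ and θ₂ are not orthogonal. -/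
/-- The parity map `ℤ₂ × ℤ₄ → ℤ₂` (second coordinate mod 2). -/
def par : G24 → ZMod 2 := fun x => (x.2.val : ZMod 2)

lemma par_add : ∀ x y : G24, par (-x + y) = -par x + par y := by decide

lemma ord4_iff : ∀ x : G24, addOrderOf x = 4 ↔ par x = 1 := by
  intro x
  have h4 : (4 : ℕ) • x = 0 := by
    have hx : ∀ y : G24, y + y + (y + y) = 0 := by decide
    calc (4:ℕ) • x = x + x + (x + x) := by abel
    _ = 0 := hx x
  have hdvd : addOrderOf x ∣ 4 := addOrderOf_dvd_of_nsmul_eq_zero h4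
  have h2 : addOrderOf x ∣ 2 ↔ (2:ℕ) • x = 0 := addOrderOf_dvd_iff_nsmul_eq_zero
  have h2' : ((2:ℕ) • x = 0) ↔ par x = 0 := by
    have hx : ∀ y : G24, (y + y = 0) ↔ par y = 0 := by decide
    rw [show (2:ℕ) • x = x + x from two_nsmul x]; exact hx x
  have key : ∀ n : ℕ, n ≤ 4 → n ∣ 4 → (n = 4 ↔ ¬ n ∣ 2) := by decide
  have hne : ∀ t : ZMod 2, (¬ t = 0) ↔ t = 1 := by decide
  rw [key _ (Nat.le_of_dvd (by norm_num) hdvd) hdvd, h2, h2', hne]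

/-- Counting a predicate pre-composed with a bijection. -/
lemma count_comp {f : G24 → G24} (hf : Function.Bijective f) (P : G24 → Prop)
    [DecidablePred P] :
    (Finset.univ.filter fun x => P (f x)).card = (Finset.univ.filter P).card := by
  apply Finset.card_bij (fun x _ => f x)
  · intro a ha
    simp only [Finset.mem_filter, Finset.mem_univ, true_and] at ha ⊢
    exact ha
  · intro a _ b _ hab
    exact hf.injective hab
  · intro b hb
    obtain ⟨a, rfl⟩ := hf.surjective b
    simp only [Finset.mem_filter, Finset.mem_univ, true_and] at hb
    exact ⟨a, by simp [hb], rfl⟩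

theorem not_orth_of_A44_inter_two (θ₁ θ₂ : G24 → G24)
    (h₁ : IsNormOrtho θ₁) (h₂ : IsNormOrtho θ₂)
    (h : (A 4 4 θ₁ ∩ A 4 4 θ₂).ncard = 2) : ¬ Orthogonal θ₁ θ₂ := by
  classical
  intro ho
  have base : (Finset.univ.filter fun x : G24 => par x = 1).card = 4 := by decide
  -- counts for θ₁, θ₂ (bijections)
  have cq : (Finset.univ.filter fun x : G24 => par (θ₁ x) = 1).card = 4 := by
    rw [count_comp h₁.1 (fun y => par y = 1)]; exact base
  have cr : (Finset.univ.filter fun x : G24 => par (θ₂ x) = 1).card = 4 := by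
    rw [count_comp h₂.1 (fun y => par y = 1)]; exact base
  -- counts for the complete mappings and the orthogonality map
  have cd1 : (Finset.univ.filter fun x : G24 => -par x + par (θ₁ x) = 1).card = 4 := by
    have hc := count_comp h₁.2.2 (fun y => par y = 1)
    rw [base] at hc
    have hEq : (Finset.univ.filter fun x : G24 => -par x + par (θ₁ x) = 1)
        = Finset.univ.filter fun x : G24 => par (-x + θ₁ x) = 1 :=
      Finset.filter_congr fun x _ => by simp [par_add]
    rw [hEq]; exact hc
  have cd2 : (Finset.univ.filter fun x : G24 => -par x + par (θ₂ x) = 1).card = 4 := by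
    have hc := count_comp h₂.2.2 (fun y => par y = 1)
    rw [base] at hc
    have hEq : (Finset.univ.filter fun x : G24 => -par x + par (θ₂ x) = 1)
        = Finset.univ.filter fun x : G24 => par (-x + θ₂ x) = 1 :=
      Finset.filter_congr fun x _ => by simp [par_add]
    rw [hEq]; exact hc
  have cd3 : (Finset.univ.filter fun x : G24 =>
      -par (θ₁ x) + par (θ₂ x) = 1).card = 4 := by
    have hc := count_comp ho (fun y => par y = 1)
    rw [base] at hc
    have hEq : (Finset.univ.filter fun x : G24 => -par (θ₁ x) + par (θ₂ x) = 1)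
        = Finset.univ.filter fun x : G24 => par (-θ₁ x + θ₂ x) = 1 :=
      Finset.filter_congr fun x _ => by simp [par_add]
    rw [hEq]; exact hc
  -- the hypothesis, as a Finset count
  have hA : A 4 4 θ₁ ∩ A 4 4 θ₂
      = {x : G24 | par x = 1 ∧ par (θ₁ x) = 1 ∧ par (θ₂ x) = 1} := by
    ext x
    simp only [A, Set.mem_inter_iff, Set.mem_setOf_eq, ord4_iff]
    tauto
  rw [hA, Set.ncard_eq_toFinset_card'] at h
  simp only [Set.toFinset_setOf] at h
  -- cell decompositions
  have e1 : (Finset.univ.filter fun x : G24 => par x = 1).card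
      = (Finset.univ.filter fun x : G24 => par x = 1 ∧ par (θ₁ x) = 0 ∧ par (θ₂ x) = 0).card
      + (Finset.univ.filter fun x : G24 => par x = 1 ∧ par (θ₁ x) = 0 ∧ par (θ₂ x) = 1).card
      + (Finset.univ.filter fun x : G24 => par x = 1 ∧ par (θ₁ x) = 1 ∧ par (θ₂ x) = 0).card
      + (Finset.univ.filter fun x : G24 => par x = 1 ∧ par (θ₁ x) = 1 ∧ par (θ₂ x) = 1).card := by
    have L : ∀ a b c : ZMod 2, (if a = 1 then (1:ℕ) else 0)
        = (if a = 1 ∧ b = 0 ∧ c = 0 then 1 else 0) + (if a = 1 ∧ b = 0 ∧ c = 1 then 1 else 0)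
        + (if a = 1 ∧ b = 1 ∧ c = 0 then 1 else 0) + (if a = 1 ∧ b = 1 ∧ c = 1 then 1 else 0) := by
      decide
    simp only [Finset.card_filter, ← Finset.sum_add_distrib]
    exact Finset.sum_congr rfl fun x _ => L (par x) (par (θ₁ x)) (par (θ₂ x))
  have e2 : (Finset.univ.filter fun x : G24 => par (θ₁ x) = 1).card
      = (Finset.univ.filter fun x : G24 => par x = 0 ∧ par (θ₁ x) = 1 ∧ par (θ₂ x) = 0).card
      + (Finset.univ.filter fun x : G24 => par x = 0 ∧ par (θ₁ x) = 1 ∧ par (θ₂ x) = 1).card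
      + (Finset.univ.filter fun x : G24 => par x = 1 ∧ par (θ₁ x) = 1 ∧ par (θ₂ x) = 0).card
      + (Finset.univ.filter fun x : G24 => par x = 1 ∧ par (θ₁ x) = 1 ∧ par (θ₂ x) = 1).card := by
    have L : ∀ a b c : ZMod 2, (if b = 1 then (1:ℕ) else 0)
        = (if a = 0 ∧ b = 1 ∧ c = 0 then 1 else 0) + (if a = 0 ∧ b = 1 ∧ c = 1 then 1 else 0)
        + (if a = 1 ∧ b = 1 ∧ c = 0 then 1 else 0) + (if a = 1 ∧ b = 1 ∧ c = 1 then 1 else 0) := by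
      decide
    simp only [Finset.card_filter, ← Finset.sum_add_distrib]
    exact Finset.sum_congr rfl fun x _ => L (par x) (par (θ₁ x)) (par (θ₂ x))
  have e3 : (Finset.univ.filter fun x : G24 => par (θ₂ x) = 1).card
      = (Finset.univ.filter fun x : G24 => par x = 0 ∧ par (θ₁ x) = 0 ∧ par (θ₂ x) = 1).card
      + (Finset.univ.filter fun x : G24 => par x = 0 ∧ par (θ₁ x) = 1 ∧ par (θ₂ x) = 1).card
      + (Finset.univ.filter fun x : G24 => par x = 1 ∧ par (θ₁ x) = 0 ∧ par (θ₂ x) = 1).card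
      + (Finset.univ.filter fun x : G24 => par x = 1 ∧ par (θ₁ x) = 1 ∧ par (θ₂ x) = 1).card := by
    have L : ∀ a b c : ZMod 2, (if c = 1 then (1:ℕ) else 0)
        = (if a = 0 ∧ b = 0 ∧ c = 1 then 1 else 0) + (if a = 0 ∧ b = 1 ∧ c = 1 then 1 else 0)
        + (if a = 1 ∧ b = 0 ∧ c = 1 then 1 else 0) + (if a = 1 ∧ b = 1 ∧ c = 1 then 1 else 0) := by
      decide
    simp only [Finset.card_filter, ← Finset.sum_add_distrib]
    exact Finset.sum_congr rfl fun x _ => L (par x) (par (θ₁ x)) (par (θ₂ x))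
  have e4 : (Finset.univ.filter fun x : G24 => -par x + par (θ₁ x) = 1).card
      = (Finset.univ.filter fun x : G24 => par x = 0 ∧ par (θ₁ x) = 1 ∧ par (θ₂ x) = 0).card
      + (Finset.univ.filter fun x : G24 => par x = 0 ∧ par (θ₁ x) = 1 ∧ par (θ₂ x) = 1).card
      + (Finset.univ.filter fun x : G24 => par x = 1 ∧ par (θ₁ x) = 0 ∧ par (θ₂ x) = 0).card
      + (Finset.univ.filter fun x : G24 => par x = 1 ∧ par (θ₁ x) = 0 ∧ par (θ₂ x) = 1).card := by
    have L : ∀ a b c : ZMod 2, (if -a + b = 1 then (1:ℕ) else 0)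
        = (if a = 0 ∧ b = 1 ∧ c = 0 then 1 else 0) + (if a = 0 ∧ b = 1 ∧ c = 1 then 1 else 0)
        + (if a = 1 ∧ b = 0 ∧ c = 0 then 1 else 0) + (if a = 1 ∧ b = 0 ∧ c = 1 then 1 else 0) := by
      decide
    simp only [Finset.card_filter, ← Finset.sum_add_distrib]
    exact Finset.sum_congr rfl fun x _ => L (par x) (par (θ₁ x)) (par (θ₂ x))
  have e5 : (Finset.univ.filter fun x : G24 => -par x + par (θ₂ x) = 1).card
      = (Finset.univ.filter fun x : G24 => par x = 0 ∧ par (θ₁ x) = 0 ∧ par (θ₂ x) = 1).card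
      + (Finset.univ.filter fun x : G24 => par x = 0 ∧ par (θ₁ x) = 1 ∧ par (θ₂ x) = 1).card
      + (Finset.univ.filter fun x : G24 => par x = 1 ∧ par (θ₁ x) = 0 ∧ par (θ₂ x) = 0).card
      + (Finset.univ.filter fun x : G24 => par x = 1 ∧ par (θ₁ x) = 1 ∧ par (θ₂ x) = 0).card := by
    have L : ∀ a b c : ZMod 2, (if -a + c = 1 then (1:ℕ) else 0)
        = (if a = 0 ∧ b = 0 ∧ c = 1 then 1 else 0) + (if a = 0 ∧ b = 1 ∧ c = 1 then 1 else 0)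
        + (if a = 1 ∧ b = 0 ∧ c = 0 then 1 else 0) + (if a = 1 ∧ b = 1 ∧ c = 0 then 1 else 0) := by
      decide
    simp only [Finset.card_filter, ← Finset.sum_add_distrib]
    exact Finset.sum_congr rfl fun x _ => L (par x) (par (θ₁ x)) (par (θ₂ x))
  have e6 : (Finset.univ.filter fun x : G24 => -par (θ₁ x) + par (θ₂ x) = 1).card
      = (Finset.univ.filter fun x : G24 => par x = 0 ∧ par (θ₁ x) = 0 ∧ par (θ₂ x) = 1).card
      + (Finset.univ.filter fun x : G24 => par x = 0 ∧ par (θ₁ x) = 1 ∧ par (θ₂ x) = 0).card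
      + (Finset.univ.filter fun x : G24 => par x = 1 ∧ par (θ₁ x) = 0 ∧ par (θ₂ x) = 1).card
      + (Finset.univ.filter fun x : G24 => par x = 1 ∧ par (θ₁ x) = 1 ∧ par (θ₂ x) = 0).card := by
    have L : ∀ a b c : ZMod 2, (if -b + c = 1 then (1:ℕ) else 0)
        = (if a = 0 ∧ b = 0 ∧ c = 1 then 1 else 0) + (if a = 0 ∧ b = 1 ∧ c = 0 then 1 else 0)
        + (if a = 1 ∧ b = 0 ∧ c = 1 then 1 else 0) + (if a = 1 ∧ b = 1 ∧ c = 0 then 1 else 0) := by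
      decide
    simp only [Finset.card_filter, ← Finset.sum_add_distrib]
    exact Finset.sum_congr rfl fun x _ => L (par x) (par (θ₁ x)) (par (θ₂ x))
  -- total count
  have e0 : (Finset.univ.filter fun _ : G24 => True).card
      = (Finset.univ.filter fun x : G24 => par x = 0 ∧ par (θ₁ x) = 0 ∧ par (θ₂ x) = 0).card
      + (Finset.univ.filter fun x : G24 => par x = 0 ∧ par (θ₁ x) = 0 ∧ par (θ₂ x) = 1).card
      + (Finset.univ.filter fun x : G24 => par x = 0 ∧ par (θ₁ x) = 1 ∧ par (θ₂ x) = 0).card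
      + (Finset.univ.filter fun x : G24 => par x = 0 ∧ par (θ₁ x) = 1 ∧ par (θ₂ x) = 1).card
      + (Finset.univ.filter fun x : G24 => par x = 1 ∧ par (θ₁ x) = 0 ∧ par (θ₂ x) = 0).card
      + (Finset.univ.filter fun x : G24 => par x = 1 ∧ par (θ₁ x) = 0 ∧ par (θ₂ x) = 1).card
      + (Finset.univ.filter fun x : G24 => par x = 1 ∧ par (θ₁ x) = 1 ∧ par (θ₂ x) = 0).card
      + (Finset.univ.filter fun x : G24 => par x = 1 ∧ par (θ₁ x) = 1 ∧ par (θ₂ x) = 1).card := by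
    have L : ∀ a b c : ZMod 2, (if True then (1:ℕ) else 0)
        = (if a = 0 ∧ b = 0 ∧ c = 0 then 1 else 0) + (if a = 0 ∧ b = 0 ∧ c = 1 then 1 else 0)
        + (if a = 0 ∧ b = 1 ∧ c = 0 then 1 else 0) + (if a = 0 ∧ b = 1 ∧ c = 1 then 1 else 0)
        + (if a = 1 ∧ b = 0 ∧ c = 0 then 1 else 0) + (if a = 1 ∧ b = 0 ∧ c = 1 then 1 else 0)
        + (if a = 1 ∧ b = 1 ∧ c = 0 then 1 else 0) + (if a = 1 ∧ b = 1 ∧ c = 1 then 1 else 0) := by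
      decide
    simp only [Finset.card_filter, ← Finset.sum_add_distrib]
    exact Finset.sum_congr rfl fun x _ => L (par x) (par (θ₁ x)) (par (θ₂ x))
  have e8 : (Finset.univ.filter fun _ : G24 => True).card = 8 := by decide
  -- the zero element lies in the (0,0,0) cell
  have e9 : 0 < (Finset.univ.filter fun x : G24 =>
      par x = 0 ∧ par (θ₁ x) = 0 ∧ par (θ₂ x) = 0).card := by
    apply Finset.card_pos.mpr
    refine ⟨0, ?_⟩
    have hp0 : par (0 : G24) = 0 := by decide
    simp only [Finset.mem_filter, Finset.mem_univ, true_and, h₁.2.1, h₂.2.1, hp0]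
    try tauto
  omega
end
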